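/- Let K : ℕ → ℕ satisfy 1 ≤ K(n) and K(n) = O(log n). Set n′ = ⌊n/log log n⌋, t_ε = ⌊50·(1 + (log n)/(2K(n)))·n/log log n⌋, and q_n = 1 − (1 − (C(n′,2) − 10n′)/C(n,2))^{K(n)}. Then Pr(Bin(t_ε, q_n) < 10 n′) → 0 as n → ∞. -/

import Mathlib

open Filter

noncomputable def binomLT (N : ℕ) (q a : ℝ) : ℝ :=
  ∑ k ∈ Finset.range (N + 1),
    if (k : ℝ) < a then (N.choose k : ℝ) * q ^ k * (1 - q) ^ (N - k) else 0

lemma binomLT_nonneg (N : ℕ) (q a : ℝ) (hq0 : 0 ≤ q) (hq1 : q ≤ 1) :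
    0 ≤ binomLT N q a := by
  apply Finset.sum_nonneg
  intro k _
  split_ifs
  · have h1q : (0:ℝ) ≤ 1 - q := by linarith
    positivity
  · exact le_refl 0

lemma binomLT_le_exp (N : ℕ) (q a : ℝ) (hq0 : 0 ≤ q) (hq1 : q ≤ 1) :
    binomLT N q a ≤ Real.exp (a * Real.log 2 - q * N / 2) := by
  have h1q : (0:ℝ) ≤ 1 - q := by linarith
  have key : binomLT N q a ≤ Real.exp (a * Real.log 2) * (1 - q / 2) ^ N := by
    unfold binomLT
    have hsum : ∀ k ∈ Finset.range (N + 1),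
        (if (k : ℝ) < a then (N.choose k : ℝ) * q ^ k * (1 - q) ^ (N - k) else 0)
          ≤ Real.exp (a * Real.log 2) *
            ((N.choose k : ℝ) * (q / 2) ^ k * (1 - q) ^ (N - k)) := by
      intro k _
      split_ifs with hk
      · have h2k : (2:ℝ) ^ k ≤ Real.exp (a * Real.log 2) := by
          have he : (2:ℝ) ^ k = Real.exp ((k : ℝ) * Real.log 2) := by
            rw [Real.exp_nat_mul, Real.exp_log] <;> norm_num
          rw [he]
          apply Real.exp_le_exp.2
          have hlog : (0:ℝ) ≤ Real.log 2 := Real.log_nonneg (by norm_num)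
          exact mul_le_mul_of_nonneg_right hk.le hlog
        have hcan : (2:ℝ) ^ k * (q / 2) ^ k = q ^ k := by
          rw [← mul_pow, mul_div_cancel₀]
          norm_num
        have heq : (N.choose k : ℝ) * q ^ k * (1 - q) ^ (N - k)
            = (2:ℝ) ^ k * ((N.choose k : ℝ) * (q / 2) ^ k * (1 - q) ^ (N - k)) := by
          rw [← hcan]; ring
        rw [heq]
        apply mul_le_mul_of_nonneg_right h2k
        positivity
      · positivity
    calc binomLT N q a
        ≤ ∑ k ∈ Finset.range (N + 1), Real.exp (a * Real.log 2) *
            ((N.choose k : ℝ) * (q / 2) ^ k * (1 - q) ^ (N - k)) :=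
          Finset.sum_le_sum hsum
      _ = Real.exp (a * Real.log 2) *
          ∑ k ∈ Finset.range (N + 1),
            (N.choose k : ℝ) * (q / 2) ^ k * (1 - q) ^ (N - k) := by
          rw [Finset.mul_sum]
      _ = Real.exp (a * Real.log 2) * (q / 2 + (1 - q)) ^ N := by
          rw [add_pow]
          congr 1
          refine Finset.sum_congr rfl fun k _ => by ring
      _ = Real.exp (a * Real.log 2) * (1 - q / 2) ^ N := by ring_nf
  have h2 : (1 - q / 2) ^ N ≤ Real.exp (-(q * N / 2)) := by
    have hb : 1 - q / 2 ≤ Real.exp (-(q / 2)) := by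
      linarith [Real.add_one_le_exp (-(q / 2))]
    have h0 : (0:ℝ) ≤ 1 - q / 2 := by linarith
    calc (1 - q / 2) ^ N ≤ Real.exp (-(q / 2)) ^ N := pow_le_pow_left₀ h0 hb N
      _ = Real.exp ((N : ℝ) * -(q / 2)) := (Real.exp_nat_mul _ N).symm
      _ = Real.exp (-(q * N / 2)) := by ring_nf
  calc binomLT N q a ≤ Real.exp (a * Real.log 2) * (1 - q / 2) ^ N := key
    _ ≤ Real.exp (a * Real.log 2) * Real.exp (-(q * N / 2)) :=
        mul_le_mul_of_nonneg_left h2 (Real.exp_nonneg _)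
    _ = Real.exp (a * Real.log 2 - q * N / 2) := by
        rw [← Real.exp_add]; ring_nf

lemma log_le_two_sqrt {t : ℝ} (ht : 0 < t) : Real.log t ≤ 2 * Real.sqrt t := by
  have hs : 0 < Real.sqrt t := Real.sqrt_pos.mpr ht
  have h1 : Real.log (Real.sqrt t) = Real.log t / 2 := Real.log_sqrt ht.le
  have h2 : Real.log (Real.sqrt t) ≤ Real.sqrt t - 1 := Real.log_le_sub_one_of_pos hs
  nlinarith [hs]

lemma aux80 {y : ℝ} (hy : (1638401:ℝ) ≤ y) : 80 * (Real.log y) ^ 2 ≤ y := by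
  have hy0 : (0:ℝ) < y := by linarith
  set s := Real.sqrt y with hs
  have hs0 : 0 ≤ s := Real.sqrt_nonneg y
  have hss : s * s = y := Real.mul_self_sqrt hy0.le
  have hls : Real.log s = Real.log y / 2 := Real.log_sqrt hy0.le
  have hs1280 : (1280:ℝ) ≤ s := by
    have : Real.sqrt (1280 ^ 2) ≤ Real.sqrt y := Real.sqrt_le_sqrt (by norm_num; linarith)
    rwa [Real.sqrt_sq (by norm_num)] at this
  have hsl : Real.log s ≤ 2 * Real.sqrt s := log_le_two_sqrt (by linarith)
  have hu : Real.sqrt s * Real.sqrt s = s := Real.mul_self_sqrt (by linarith)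
  have hlogy : Real.log y ≤ 4 * Real.sqrt s := by
    rw [show Real.log y = 2 * Real.log s by linarith [hls]]
    linarith
  have hly0 : 0 ≤ Real.log y := Real.log_nonneg (by linarith)
  have h16 : (Real.log y) ^ 2 ≤ 16 * s := by nlinarith [Real.sqrt_nonneg s]
  nlinarith

lemma sqrt_natCast_tendsto : Tendsto (fun n : ℕ => Real.sqrt n) atTop atTop := by
  have h : Tendsto (fun y : ℝ => y ^ ((1:ℝ)/2)) atTop atTop :=
    tendsto_rpow_atTop (by norm_num)
  have h2 : Tendsto (fun n : ℕ => ((n:ℝ)) ^ ((1:ℝ)/2)) atTop atTop :=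
    h.comp tendsto_natCast_atTop_atTop
  refine h2.congr fun n => ?_
  rw [← Real.sqrt_eq_rpow]



set_option maxHeartbeats 4000000 in
lemma core (Kn n' tN n : ℕ) (x L LL q : ℝ)
    (hK1 : 1 ≤ Kn)
    (hLL2 : 2 ≤ LL)
    (h80 : 80 * LL ^ 2 ≤ L)
    (hLsx : L ≤ 2 * Real.sqrt x)
    (hLLL : LL ≤ L)
    (hx : (1600000000:ℝ) ≤ x)
    (hn'1 : x / LL - 1 < (n' : ℝ))
    (hn'2 : (n' : ℝ) ≤ x / LL)
    (hden : ((n.choose 2 : ℕ) : ℝ) = x * (x - 1) / 2)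
    (hq : q = 1 - (1 - (((n'.choose 2 : ℕ) : ℝ) - 10 * (n' : ℝ)) / ((n.choose 2 : ℕ) : ℝ)) ^ Kn)
    (htl : 50 * (1 + L / (2 * (Kn : ℝ))) * x / LL - 1 < (tN : ℝ)) :
    0 ≤ binomLT tN q (10 * (n' : ℝ)) ∧
      binomLT tN q (10 * (n' : ℝ)) ≤ Real.exp (10 - 5 * Real.sqrt x) := by
  have hx0 : (0:ℝ) < x := by linarith
  have hLL0 : (0:ℝ) < LL := by linarith
  have hL0 : (0:ℝ) < L := by linarith
  have hsx : (40000:ℝ) ≤ Real.sqrt x := by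
    have h := Real.sqrt_le_sqrt (show (40000:ℝ)^2 ≤ x by norm_num; linarith)
    rwa [Real.sqrt_sq (by norm_num)] at h
  have hxss : Real.sqrt x * Real.sqrt x = x := Real.mul_self_sqrt hx0.le
  obtain ⟨m, hmdef⟩ : ∃ m' : ℝ, m' = x / LL := ⟨_, rfl⟩
  have hxm : m * LL = x := by rw [hmdef]; exact div_mul_cancel₀ x (ne_of_gt hLL0)
  have hm4 : (10000:ℝ) ≤ m := by
    rw [hmdef, le_div_iff₀ hLL0]
    have ha : 10000 * LL ≤ 20000 * Real.sqrt x := by linarith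
    have hb : 20000 * Real.sqrt x ≤ Real.sqrt x * Real.sqrt x :=
      mul_le_mul_of_nonneg_right (by linarith) (Real.sqrt_nonneg x)
    linarith
  have hm0 : (0:ℝ) ≤ m := by linarith
  have hmsx : Real.sqrt x / 2 ≤ m := by
    rw [hmdef, div_le_div_iff₀ (by norm_num) hLL0]
    have ha : Real.sqrt x * LL ≤ Real.sqrt x * (2 * Real.sqrt x) :=
      mul_le_mul_of_nonneg_left (by linarith) (Real.sqrt_nonneg x)
    nlinarith [hxss]
  have hn1 : m - 1 < (n' : ℝ) := by rw [hmdef]; exact hn'1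
  have hn2 : (n' : ℝ) ≤ m := by rw [hmdef]; exact hn'2
  have hn0 : (0:ℝ) ≤ (n' : ℝ) := Nat.cast_nonneg _
  have hK : (1:ℝ) ≤ (Kn : ℝ) := by exact_mod_cast hK1
  have hc2n' : ((n'.choose 2 : ℕ) : ℝ) = (n':ℝ) * ((n':ℝ) - 1) / 2 :=
    Nat.cast_choose_two ℝ n'
  have hc2pos : (0:ℝ) < ((n.choose 2 : ℕ) : ℝ) := by
    rw [hden]
    have : (0:ℝ) < x * (x - 1) := mul_pos (by linarith) (by linarith)
    linarith
  obtain ⟨p, hpdef⟩ : ∃ p' : ℝ, p' = (((n'.choose 2 : ℕ) : ℝ) - 10 * (n':ℝ)) / ((n.choose 2 : ℕ) : ℝ) :=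
    ⟨_, rfl⟩
  have hnum : m * m / 8 ≤ ((n'.choose 2 : ℕ) : ℝ) - 10 * (n':ℝ) := by
    rw [hc2n']
    have hmc : m * m ≤ ((n':ℝ) + 1) * ((n':ℝ) + 1) :=
      mul_self_le_mul_self hm0 (by linarith)
    nlinarith [sq_nonneg ((n':ℝ) - 30)]
  have hdle : ((n.choose 2 : ℕ) : ℝ) ≤ m ^ 2 * LL ^ 2 / 2 := by
    rw [hden]
    have hxx : m ^ 2 * LL ^ 2 = x * x := by rw [← hxm]; ring
    nlinarith [hxx]
  have hp0 : 0 ≤ p := by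
    rw [hpdef]
    exact div_nonneg (by nlinarith [hnum, mul_self_nonneg m]) hc2pos.le
  have hp1 : p ≤ 1 := by
    rw [hpdef, div_le_one hc2pos, hden, hc2n']
    have h2m : 2 * m ≤ x := by
      have := mul_le_mul_of_nonneg_left hLL2 hm0
      linarith [hxm]
    have hn'x : (n':ℝ) ≤ x := by linarith
    have hprod : (n':ℝ) * ((n':ℝ) - 1) ≤ x * (x - 1) :=
      mul_le_mul hn'x (by linarith) (by linarith) (by linarith)
    linarith
  have hp4 : 1 / (4 * LL ^ 2) ≤ p := by
    rw [hpdef, div_le_div_iff₀ (by positivity) hc2pos]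
    have := mul_le_mul_of_nonneg_right hnum (show (0:ℝ) ≤ 4 * LL ^ 2 by positivity)
    nlinarith [hdle]
  have hLp : (20:ℝ) ≤ L * p := by
    have h1 : (1:ℝ) ≤ p * (4 * LL ^ 2) := by
      rw [div_le_iff₀ (by positivity)] at hp4; linarith
    linarith [mul_nonneg hp0 (sub_nonneg.2 h80), h1]
  have hKp0 : 0 ≤ (Kn:ℝ) * p := by positivity
  have h1Kp : (0:ℝ) < 1 + (Kn:ℝ) * p := by linarith
  have hq_lb : (Kn:ℝ) * p / (1 + (Kn:ℝ) * p) ≤ q := by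
    have hb : (1:ℝ) + (Kn : ℝ) * p ≤ (1 + p) ^ Kn :=
      one_add_mul_le_pow (by linarith) Kn
    have hup : (0:ℝ) < (1 + p) ^ Kn := by positivity
    have hmul : (1 - p) ^ Kn * (1 + p) ^ Kn ≤ 1 := by
      rw [← mul_pow]
      have e1 : (0:ℝ) ≤ (1 - p) * (1 + p) := mul_nonneg (by linarith) (by linarith)
      have e2 : (1 - p) * (1 + p) ≤ 1 := by
        have hpp : (1 - p) * (1 + p) = 1 - p ^ 2 := by ring
        rw [hpp]
        have := sq_nonneg p
        linarith
      exact pow_le_one₀ e1 e2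
    have h3 : (1 - p) ^ Kn ≤ 1 / (1 + p) ^ Kn := by
      rw [le_div_iff₀ hup]; exact hmul
    have h4 : 1 / (1 + p) ^ Kn ≤ 1 / (1 + (Kn:ℝ) * p) :=
      one_div_le_one_div_of_le h1Kp hb
    have h5 : (Kn:ℝ) * p / (1 + (Kn:ℝ) * p) = 1 - 1 / (1 + (Kn:ℝ) * p) := by
      field_simp
      ring
    rw [hq, ← hpdef, h5]; linarith
  have hq0 : 0 ≤ q := by
    have := pow_le_one₀ (n := Kn) (show (0:ℝ) ≤ 1 - p by linarith) (by linarith : 1 - p ≤ 1)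
    rw [hq, ← hpdef]; linarith
  have hq1 : q ≤ 1 := by
    have := pow_nonneg (show (0:ℝ) ≤ 1 - p by linarith) Kn
    rw [hq, ← hpdef]; linarith
  have htε0 : (0:ℝ) ≤ (tN : ℝ) := Nat.cast_nonneg _
  obtain ⟨r, hrdef⟩ : ∃ r' : ℝ, r' = L / (Kn:ℝ) := ⟨_, rfl⟩
  have hr0 : 0 ≤ r := by rw [hrdef]; positivity
  have hrK : r * (Kn:ℝ) = L := by rw [hrdef]; exact div_mul_cancel₀ L (by linarith)
  have hTval : 50 * (1 + L / (2 * (Kn : ℝ))) * x / LL = 50 * m + 25 * r * m := by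
    rw [hrdef, hmdef]
    field_simp
    ring
  rw [hTval] at htl
  have h40 : 40 * (n' : ℝ) ≤ q * (tN : ℝ) := by
    rcases le_or_gt 10 ((Kn:ℝ) * p) with hcase | hcase
    · have hq10 : (10:ℝ) / 11 ≤ q := by
        have h : (10:ℝ) / 11 ≤ (Kn:ℝ) * p / (1 + (Kn:ℝ) * p) := by
          rw [div_le_div_iff₀ (by norm_num) h1Kp]; linarith
        linarith
      have htT : 50 * m - 1 ≤ (tN : ℝ) := by
        linarith [mul_nonneg hr0 hm0]
      have h := mul_le_mul hq10 htT (by linarith) (by linarith)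
      linarith
    · have hq11 : (Kn:ℝ) * p / 11 ≤ q := by
        have h : (Kn:ℝ) * p / 11 ≤ (Kn:ℝ) * p / (1 + (Kn:ℝ) * p) :=
          div_le_div_of_nonneg_left hKp0 h1Kp (by linarith)
        linarith
      have htT2 : 50 * m + 25 * r * m - 1 ≤ (tN : ℝ) := by linarith
      have hrm0 : (0:ℝ) ≤ 50 * m + 25 * r * m - 1 := by
        linarith [mul_nonneg hr0 hm0]
      have hmain := mul_le_mul hq11 htT2 hrm0 (by linarith)
      have hexp : (Kn:ℝ) * p / 11 * (50 * m + 25 * r * m - 1)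
          = (50 * ((Kn:ℝ) * p) * m + 25 * (r * (Kn:ℝ)) * p * m - (Kn:ℝ) * p) / 11 := by
        ring
      rw [hexp, hrK] at hmain
      have hLpm : 20 * m ≤ L * p * m := mul_le_mul_of_nonneg_right hLp hm0
      linarith [mul_nonneg hKp0 hm0]
  refine ⟨binomLT_nonneg _ _ _ hq0 hq1, ?_⟩
  have hb := binomLT_le_exp tN q (10 * (n' : ℝ)) hq0 hq1
  refine hb.trans (Real.exp_le_exp.2 ?_)
  have hlog2 : Real.log 2 ≤ 1 := by
    linarith [Real.log_le_sub_one_of_pos (show (0:ℝ) < 2 by norm_num)]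
  have hlog2' : (0:ℝ) ≤ Real.log 2 := Real.log_nonneg (by norm_num)
  have h1 : 10 * (n':ℝ) * Real.log 2 ≤ 10 * (n':ℝ) := by
    have := mul_le_mul_of_nonneg_left hlog2 (show (0:ℝ) ≤ 10 * (n':ℝ) by positivity)
    linarith
  linarith [h40, hmsx, hn1]

theorem phase_one_succeeds
    (K : ℕ → ℕ) (hK1 : ∀ n, 1 ≤ K n)
    (hKO : ∃ C : ℝ, ∀ᶠ n : ℕ in atTop, (K n : ℝ) ≤ C * Real.log n) :
    Tendsto
      (fun n : ℕ =>
        let n' : ℕ := ⌊(n : ℝ) / Real.log (Real.log n)⌋₊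
        let tε : ℕ :=
          ⌊50 * (1 + Real.log n / (2 * K n)) * n / Real.log (Real.log n)⌋₊
        let q : ℝ :=
          1 - (1 - ((n'.choose 2 : ℝ) - 10 * n') / (n.choose 2 : ℝ)) ^ (K n)
        binomLT tε q (10 * (n' : ℝ)))
      atTop (nhds 0) := by
  clear hKO
  have hLinf : Tendsto (fun n : ℕ => Real.log n) atTop atTop :=
    Real.tendsto_log_atTop.comp tendsto_natCast_atTop_atTop
  have hLLinf : Tendsto (fun n : ℕ => Real.log (Real.log n)) atTop atTop :=
    Real.tendsto_log_atTop.comp hLinf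
  have main : ∀ᶠ n : ℕ in atTop,
      (0 ≤ (fun n : ℕ =>
        let n' : ℕ := ⌊(n : ℝ) / Real.log (Real.log n)⌋₊
        let tε : ℕ :=
          ⌊50 * (1 + Real.log n / (2 * K n)) * n / Real.log (Real.log n)⌋₊
        let q : ℝ :=
          1 - (1 - ((n'.choose 2 : ℝ) - 10 * n') / (n.choose 2 : ℝ)) ^ (K n)
        binomLT tε q (10 * (n' : ℝ))) n) ∧
      ((fun n : ℕ =>
        let n' : ℕ := ⌊(n : ℝ) / Real.log (Real.log n)⌋₊
        let tε : ℕ :=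
          ⌊50 * (1 + Real.log n / (2 * K n)) * n / Real.log (Real.log n)⌋₊
        let q : ℝ :=
          1 - (1 - ((n'.choose 2 : ℝ) - 10 * n') / (n.choose 2 : ℝ)) ^ (K n)
        binomLT tε q (10 * (n' : ℝ))) n ≤ Real.exp (10 - 5 * Real.sqrt n)) := by
    filter_upwards [hLLinf.eventually_ge_atTop 2,
      (hLinf.eventually_ge_atTop 1638401).mono (fun n h => aux80 h),
      tendsto_natCast_atTop_atTop.eventually_ge_atTop (1600000000:ℝ)]
      with n hLL2 h80 hxbig
    dsimp only
    have hx0 : (0:ℝ) < (n:ℝ) := by linarith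
    have hL0 : (0:ℝ) < Real.log n := Real.log_pos (by linarith)
    exact core (K n) _ _ n (n:ℝ) (Real.log n) (Real.log (Real.log n)) _
      (hK1 n) hLL2 h80 (log_le_two_sqrt hx0)
      (by linarith [Real.log_le_sub_one_of_pos hL0])
      hxbig
      (Nat.sub_one_lt_floor _)
      (Nat.floor_le (div_nonneg hx0.le (by linarith)))
      (Nat.cast_choose_two ℝ n)
      rfl
      (Nat.sub_one_lt_floor _)
  refine squeeze_zero' (main.mono fun n h => h.1) (main.mono fun n h => h.2) ?_
  have hs : Tendsto (fun n : ℕ => 10 - 5 * Real.sqrt n) atTop atBot := by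
    have h5 : Tendsto (fun n : ℕ => 5 * Real.sqrt n) atTop atTop :=
      sqrt_natCast_tendsto.const_mul_atTop (by norm_num)
    have := tendsto_atBot_add_const_left (l := (atTop : Filter ℕ)) 10
      (tendsto_neg_atTop_atBot.comp h5)
    refine this.congr fun n => ?_
    simp [sub_eq_add_neg, Function.comp]
  exact Real.tendsto_exp_atBot.comp hs
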